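/- Let L be a linear partial differential operator of order γ with coefficients of class C^{p−γ} near x_0, where p ≥ γ. If u is a C^{p+γ} function with L u = 0 in a neighborhood of x_0, then the degree-p Taylor polynomial T_p u of u at x_0 satisfies the quasi-Trefftz property T_{p−γ}[L(T_p u)] = 0, i.e. T_p u belongs to the quasi-Trefftz space QT_p = {Π ∈ P_p : T_{p−γ}[LΠ] = 0}. -/

import Mathlib

open MvPolynomial

/-- Partial derivative of a function of `d` real variables in the `g`-th direction. -/
noncomputable def pdFun {d : ℕ} (g : Fin d) (f : (Fin d → ℝ) → ℝ) : (Fin d → ℝ) → ℝ :=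
  fun x => fderiv ℝ f x (Pi.single g 1)

/-- Iterated partial derivative `∂^i = ∂_{x_1}^{i_1} ⋯ ∂_{x_d}^{i_d}` of a function. -/
noncomputable def pdMulti {d : ℕ} (i : Fin d →₀ ℕ) (f : (Fin d → ℝ) → ℝ) : (Fin d → ℝ) → ℝ :=
  ((List.ofFn fun g : Fin d => (pdFun g)^[i g]).foldr (· ∘ ·) id) f

/-- The finset of multi-indices of length `d` and total degree at most `k`. -/
noncomputable def degLE (d k : ℕ) : Finset (Fin d →₀ ℕ) :=
  (Finset.Iic (Finsupp.equivFunOnFinite.symm fun _ : Fin d => k)).filter fun j => (∑ g, j g) ≤ k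

/-- The differential operator `L = ∑_{|j| ≤ γ} c_j(x) ∂^j` applied to `f`. -/
noncomputable def applyL {d : ℕ} (γ : ℕ) (c : (Fin d →₀ ℕ) → (Fin d → ℝ) → ℝ)
    (f : (Fin d → ℝ) → ℝ) : (Fin d → ℝ) → ℝ :=
  fun x => ∑ j ∈ degLE d γ, c j x * pdMulti j f x

/-- The order-`k` Taylor polynomial of `f` at `x0`, as a function:
`∑_{|i| ≤ k} (1/i!) ∂^i f(x0) (x − x0)^i`. -/
noncomputable def taylorFun {d : ℕ} (x0 : Fin d → ℝ) (k : ℕ) (f : (Fin d → ℝ) → ℝ) :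
    (Fin d → ℝ) → ℝ :=
  fun x => ∑ i ∈ degLE d k,
    (pdMulti i f x0 / ∏ g, ((i g).factorial : ℝ)) * ∏ g, (x g - x0 g) ^ i g

/-- Iterated directional derivatives indexed by a list (head applied last). -/
noncomputable def pdList {d : ℕ} (s : List (Fin d)) (f : (Fin d → ℝ) → ℝ) : (Fin d → ℝ) → ℝ :=
  s.foldr pdFun f

section basic
variable {d : ℕ} {f f' a b : (Fin d → ℝ) → ℝ} {x0 : Fin d → ℝ}

/-- eventual smoothness near a point -/
def EvC (x0 : Fin d → ℝ) (n : ℕ) (f : (Fin d → ℝ) → ℝ) : Prop :=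
  ∀ᶠ y in nhds x0, ContDiffAt ℝ n f y

lemma EvC.of_contDiffAt {n : ℕ} (h : ContDiffAt ℝ n f x0) : EvC x0 n f :=
  h.eventually (by simp)

lemma EvC.mono {m n : ℕ} (hmn : m ≤ n) (h : EvC x0 n f) : EvC x0 m f :=
  Filter.Eventually.mono h fun _ hy => hy.of_le (by exact_mod_cast hmn)

lemma EvC.congr {n : ℕ} (h : EvC x0 n f) (he : f =ᶠ[nhds x0] f') : EvC x0 n f' := by
  have h2 : ∀ᶠ y in nhds x0, f' =ᶠ[nhds y] f := he.symm.eventuallyEq_nhds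
  filter_upwards [h, h2] with y hy hy' using hy.congr_of_eventuallyEq hy'

lemma EvC.differentiable {n : ℕ} (hn : 1 ≤ n) (h : EvC x0 n f) :
    ∀ᶠ y in nhds x0, DifferentiableAt ℝ f y :=
  Filter.Eventually.mono h fun _ hy => hy.differentiableAt (by exact_mod_cast Nat.one_le_iff_ne_zero.mp hn)

lemma pdFun_congr (g : Fin d) (h : f =ᶠ[nhds x0] f') : pdFun g f =ᶠ[nhds x0] pdFun g f' :=
  Filter.Eventually.mono (h.fderiv (𝕜 := ℝ)) fun y hy => by simp [pdFun, hy]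

lemma ContDiffAt.pdFun {n : ℕ} (g : Fin d) {y : Fin d → ℝ} (h : ContDiffAt ℝ (n + 1) f y) :
    ContDiffAt ℝ n (pdFun g f) y := by
  have h1 : ContDiffAt ℝ n (fderiv ℝ f) y := h.fderiv_right (by exact_mod_cast le_rfl)
  exact h1.clm_apply contDiffAt_const

lemma EvC.pdFun {n : ℕ} (g : Fin d) (h : EvC x0 (n + 1) f) : EvC x0 n (pdFun g f) :=
  Filter.Eventually.mono h fun _ hy => hy.pdFun g

lemma pdFun_add_apply (g : Fin d) {y : Fin d → ℝ} (ha : DifferentiableAt ℝ a y)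
    (hb : DifferentiableAt ℝ b y) :
    pdFun g (fun x => a x + b x) y = pdFun g a y + pdFun g b y := by
  simp [pdFun, fderiv_fun_add ha hb]

lemma pdFun_mul_apply (g : Fin d) {y : Fin d → ℝ} (ha : DifferentiableAt ℝ a y)
    (hb : DifferentiableAt ℝ b y) :
    pdFun g (fun x => a x * b x) y = pdFun g a y * b y + a y * pdFun g b y := by
  simp [pdFun, fderiv_fun_mul ha hb]; ring

lemma pdFun_const_mul_apply (g : Fin d) {y : Fin d → ℝ} (r : ℝ) (ha : DifferentiableAt ℝ a y) :
    pdFun g (fun x => r * a x) y = r * pdFun g a y := by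
  simp [pdFun, fderiv_const_mul ha]

lemma pdFun_sum_apply {ι : Type*} (g : Fin d) {y : Fin d → ℝ} (s : Finset ι)
    (F : ι → (Fin d → ℝ) → ℝ) (h : ∀ r ∈ s, DifferentiableAt ℝ (F r) y) :
    pdFun g (fun x => ∑ r ∈ s, F r x) y = ∑ r ∈ s, pdFun g (F r) y := by
  simp [pdFun, fderiv_fun_sum h]

lemma pdFun_zero {g : Fin d} : pdFun (d := d) g (fun _ => 0) = fun _ => 0 := by
  funext y; simp [pdFun]

lemma pdFun_comm (g g' : Fin d) {y : Fin d → ℝ} (h : ContDiffAt ℝ 2 f y) :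
    pdFun g (pdFun g' f) y = pdFun g' (pdFun g f) y := by
  have hsymm := h.isSymmSndFDerivAt (by norm_num)
  have hdiff : DifferentiableAt ℝ (fderiv ℝ f) y := by
    have : ContDiffAt ℝ 1 (fderiv ℝ f) y := h.fderiv_right (by norm_num)
    exact this.differentiableAt (by norm_num)
  have h1 : ∀ v w : Fin d → ℝ,
      fderiv ℝ (fun z => fderiv ℝ f z w) y v = fderiv ℝ (fderiv ℝ f) y v w := by
    intro v w
    have hrw : (fun z => fderiv ℝ f z w)
        = fun z => (ContinuousLinearMap.apply ℝ ℝ w) (fderiv ℝ f z) := rfl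
    rw [hrw, fderiv_comp' y ((ContinuousLinearMap.apply ℝ ℝ w).differentiableAt) hdiff]
    simp
  have e1 : pdFun g' f = fun z => fderiv ℝ f z (Pi.single g' 1) := rfl
  have e2 : pdFun g f = fun z => fderiv ℝ f z (Pi.single g 1) := rfl
  show fderiv ℝ (pdFun g' f) y (Pi.single g 1) = fderiv ℝ (pdFun g f) y (Pi.single g' 1)
  rw [e1, e2, h1, h1, hsymm]

end basic

section lists
variable {d : ℕ} {f f' a b : (Fin d → ℝ) → ℝ} {x0 : Fin d → ℝ}

lemma pdList_nil : pdList ([] : List (Fin d)) f = f := rfl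

lemma pdList_cons (g : Fin d) (s : List (Fin d)) : pdList (g :: s) f = pdFun g (pdList s f) := rfl

lemma pdList_append (s t : List (Fin d)) : pdList (s ++ t) f = pdList s (pdList t f) := by
  induction s with
  | nil => rfl
  | cons g s ih => simp [pdList_cons, ih]

lemma pdList_congr (s : List (Fin d)) (h : f =ᶠ[nhds x0] f') :
    pdList s f =ᶠ[nhds x0] pdList s f' := by
  induction s with
  | nil => exact h
  | cons g s ih => exact pdFun_congr g ih

lemma pdList_zero (s : List (Fin d)) : pdList s (fun _ => (0:ℝ)) = fun _ => 0 := by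
  induction s with
  | nil => rfl
  | cons g s ih => rw [pdList_cons, ih, pdFun_zero]

lemma EvC.pdList {n : ℕ} (s : List (Fin d)) (h : EvC x0 (n + s.length) f) :
    EvC x0 n (pdList s f) := by
  induction s generalizing n with
  | nil => exact h
  | cons g s ih =>
    rw [pdList_cons]
    exact EvC.pdFun g (ih (by simpa [Nat.add_comm, Nat.add_assoc, Nat.add_left_comm] using h))

lemma pdList_add (s : List (Fin d)) (ha : EvC x0 s.length a) (hb : EvC x0 s.length b) :
    pdList s (fun x => a x + b x) =ᶠ[nhds x0] fun x => pdList s a x + pdList s b x := by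
  induction s with
  | nil => exact Filter.EventuallyEq.rfl
  | cons g s ih =>
    have ha' : EvC x0 s.length a := ha.mono (by simp)
    have hb' : EvC x0 s.length b := hb.mono (by simp)
    have h1 : pdList (g :: s) (fun x => a x + b x)
        =ᶠ[nhds x0] pdFun g (fun x => pdList s a x + pdList s b x) := pdFun_congr g (ih ha' hb')
    refine h1.trans ?_
    have hda : ∀ᶠ y in nhds x0, DifferentiableAt ℝ (pdList s a) y := by
      have : EvC x0 1 (pdList s a) := EvC.pdList s (by simpa [Nat.add_comm] using ha)
      exact this.differentiable le_rfl
    have hdb : ∀ᶠ y in nhds x0, DifferentiableAt ℝ (pdList s b) y := by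
      have : EvC x0 1 (pdList s b) := EvC.pdList s (by simpa [Nat.add_comm] using hb)
      exact this.differentiable le_rfl
    filter_upwards [hda, hdb] with y h1 h2
    exact pdFun_add_apply g h1 h2

lemma pdList_const_mul (s : List (Fin d)) (r : ℝ) (ha : EvC x0 s.length a) :
    pdList s (fun x => r * a x) =ᶠ[nhds x0] fun x => r * pdList s a x := by
  induction s with
  | nil => exact Filter.EventuallyEq.rfl
  | cons g s ih =>
    have ha' : EvC x0 s.length a := ha.mono (by simp)
    refine (pdFun_congr g (ih ha')).trans ?_
    have hda : ∀ᶠ y in nhds x0, DifferentiableAt ℝ (pdList s a) y := by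
      have : EvC x0 1 (pdList s a) := EvC.pdList s (by simpa [Nat.add_comm] using ha)
      exact this.differentiable le_rfl
    filter_upwards [hda] with y h1
    exact pdFun_const_mul_apply g r h1

lemma pdList_sum {ι : Type*} (s : List (Fin d)) (t : Finset ι) (F : ι → (Fin d → ℝ) → ℝ)
    (hF : ∀ r ∈ t, EvC x0 s.length (F r)) :
    pdList s (fun x => ∑ r ∈ t, F r x) =ᶠ[nhds x0] fun x => ∑ r ∈ t, pdList s (F r) x := by
  classical
  induction t using Finset.induction with
  | empty => simp only [Finset.sum_empty]; rw [pdList_zero s]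
  | insert r t hne ih =>
    have h1 : (fun x => ∑ q ∈ insert r t, F q x)
        = fun x => F r x + ∑ q ∈ t, F q x := by
      funext x; rw [Finset.sum_insert hne]
    rw [h1]
    have hFr : EvC x0 s.length (F r) := hF r (Finset.mem_insert_self r t)
    have hsum : EvC x0 s.length (fun x => ∑ q ∈ t, F q x) := by
      unfold EvC
      have : ∀ᶠ y in nhds x0, ∀ q ∈ t, ContDiffAt ℝ s.length (F q) y := by
        rw [Filter.eventually_all_finset]
        exact fun q hq => hF q (Finset.mem_insert_of_mem hq)
      exact Filter.Eventually.mono this fun y hy => ContDiffAt.sum fun q hq => hy q hq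
    refine (pdList_add s hFr hsum).trans ?_
    have h2 := ih fun q hq => hF q (Finset.mem_insert_of_mem hq)
    filter_upwards [h2] with y hy
    rw [Finset.sum_insert hne, hy]

lemma pdList_sub (s : List (Fin d)) (ha : EvC x0 s.length a) (hb : EvC x0 s.length b) :
    pdList s (fun x => a x - b x) =ᶠ[nhds x0] fun x => pdList s a x - pdList s b x := by
  have hnb : EvC x0 s.length (fun x => (-1 : ℝ) * b x) :=
    Filter.Eventually.mono hb fun y hy => by
      simpa using (contDiffAt_const (c := (-1:ℝ))).mul hy
  have h1 : (fun x => a x - b x) = fun x => a x + (-1) * b x := by funext x; ring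
  rw [h1]
  refine (pdList_add s ha hnb).trans ?_
  filter_upwards [pdList_const_mul s (-1) hb] with y hy
  rw [hy]; ring

end lists

section vanish
variable {d : ℕ} {f a b : (Fin d → ℝ) → ℝ} {x0 : Fin d → ℝ}

lemma pdList_family_vanish : ∀ (s : List (Fin d)) {ι : Type} [Fintype ι]
    (A B : ι → (Fin d → ℝ) → ℝ),
    (∀ r, EvC x0 s.length (A r)) → (∀ r, EvC x0 s.length (B r)) →
    (∀ r (t : List (Fin d)), t.length ≤ s.length → pdList t (B r) x0 = 0) →
    pdList s (fun x => ∑ r, A r x * B r x) x0 = 0 := by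
  intro s
  induction s using List.reverseRecOn with
  | nil =>
    intro ι _ A B _ _ hv
    simp only [pdList_nil]
    refine Finset.sum_eq_zero fun r _ => ?_
    have := hv r [] (by simp)
    simp only [pdList_nil] at this
    rw [this, mul_zero]
  | append_singleton t g ih =>
    intro ι _ A B hA hB hv
    have hlen : (t ++ [g]).length = t.length + 1 := by simp
    rw [pdList_append]
    -- pdFun g of the sum, eventually
    have hdA : ∀ᶠ y in nhds x0, ∀ r, DifferentiableAt ℝ (A r) y := by
      rw [Filter.eventually_all]
      intro r
      exact ((hA r).mono (by omega : 1 ≤ (t ++ [g]).length)).differentiable le_rfl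
    have hdB : ∀ᶠ y in nhds x0, ∀ r, DifferentiableAt ℝ (B r) y := by
      rw [Filter.eventually_all]
      intro r
      exact ((hB r).mono (by omega : 1 ≤ (t ++ [g]).length)).differentiable le_rfl
    have key : pdList [g] (fun x => ∑ r, A r x * B r x) =ᶠ[nhds x0]
        fun x => ∑ r : ι ⊕ ι,
          (Sum.elim (fun q => pdFun g (A q)) A r) x * (Sum.elim B (fun q => pdFun g (B q)) r) x := by
      filter_upwards [hdA, hdB] with y h1 h2
      have : pdList [g] (fun x => ∑ r, A r x * B r x) y
          = ∑ r, pdFun g (fun x => A r x * B r x) y := by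
        simp only [pdList_cons, pdList_nil]
        exact pdFun_sum_apply g Finset.univ _ fun r _ => (h1 r).mul (h2 r)
      rw [this]
      rw [Fintype.sum_sum_type]
      simp only [Sum.elim_inl, Sum.elim_inr]
      rw [← Finset.sum_add_distrib]
      refine Finset.sum_congr rfl fun r _ => ?_
      exact pdFun_mul_apply g (h1 r) (h2 r)
    have := (pdList_congr t key).eq_of_nhds
    rw [this]
    refine ih _ _ ?_ ?_ ?_
    · rintro (r | r)
      · exact ((hA r).mono (le_of_eq hlen.symm)).pdFun g
      · exact (hA r).mono (by omega)
    · rintro (r | r)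
      · exact (hB r).mono (by omega)
      · exact ((hB r).mono (le_of_eq hlen.symm)).pdFun g
    · rintro (r | r) t' ht'
      · exact hv r t' (by omega)
      · simp only [Sum.elim_inr]
        have : pdList t' (pdFun g (B r)) = pdList (t' ++ [g]) (B r) := by
          rw [pdList_append]; rfl
        rw [this]
        exact hv r (t' ++ [g]) (by simp; omega)

lemma pdList_mul_vanish {n : ℕ} (ha : EvC x0 n a) (hb : EvC x0 n b)
    (hv : ∀ t : List (Fin d), t.length ≤ n → pdList t b x0 = 0)
    (s : List (Fin d)) (hs : s.length ≤ n) :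
    pdList s (fun x => a x * b x) x0 = 0 := by
  have h1 : (fun x => a x * b x) = fun x => ∑ _r : Unit, a x * b x := by
    funext x; simp
  rw [h1]
  exact pdList_family_vanish s (fun _ => a) (fun _ => b)
    (fun _ => ha.mono hs) (fun _ => hb.mono hs) (fun _ t ht => hv t (le_trans ht hs))

lemma pdList_perm {w w' : List (Fin d)} (hp : w.Perm w') :
    EvC x0 w.length f → pdList w f =ᶠ[nhds x0] pdList w' f := by
  induction hp with
  | nil => intro _; exact Filter.EventuallyEq.rfl
  | cons x h ih =>
    intro hf
    exact pdFun_congr x (ih (hf.mono (by simp)))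
  | swap x y l =>
    intro hf
    have h2 : EvC x0 2 (pdList l f) := EvC.pdList l (hf.mono (by simp; omega))
    filter_upwards [h2] with z hz
    exact pdFun_comm y x hz
  | trans h1 h2 ih1 ih2 =>
    intro hf
    exact (ih1 hf).trans (ih2 (by rwa [← h1.length_eq]))

end vanish

section monomial
variable {d : ℕ} {x0 : Fin d → ℝ}

/-- the monomial `(x - x0)^i` -/
noncomputable def mono (x0 : Fin d → ℝ) (i : Fin d →₀ ℕ) : (Fin d → ℝ) → ℝ :=
  fun x => ∏ g, (x g - x0 g) ^ i g

/-- multiindex of a list of directions -/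
noncomputable def countF {d : ℕ} (s : List (Fin d)) : Fin d →₀ ℕ :=
  Finsupp.equivFunOnFinite.symm (fun g => s.count g)

@[simp] lemma countF_apply (s : List (Fin d)) (g : Fin d) : countF s g = s.count g := rfl

lemma contDiff_mono {n : ℕ} (i : Fin d →₀ ℕ) : ContDiff ℝ n (mono x0 i) := by
  refine contDiff_prod fun g _ => ?_
  have h1 : ContDiff ℝ n (fun x : Fin d → ℝ => x g - x0 g) :=
    ((ContinuousLinearMap.proj g : (Fin d → ℝ) →L[ℝ] ℝ).contDiff).sub contDiff_const
  exact h1.pow _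

lemma mono_differentiable (i : Fin d →₀ ℕ) (y : Fin d → ℝ) :
    DifferentiableAt ℝ (mono x0 i) y :=
  ((contDiff_mono (n := 1) i).differentiable (by norm_num)).differentiableAt

lemma pdFun_mono (g : Fin d) (i : Fin d →₀ ℕ) :
    pdFun g (mono x0 i) = fun x => (i g : ℝ) * mono x0 (i - Finsupp.single g 1) x := by
  classical
  funext x
  have hf : ∀ h : Fin d, HasFDerivAt (fun x : Fin d → ℝ => (x h - x0 h) ^ i h)
      (((i h : ℝ) * (x h - x0 h) ^ (i h - 1)) • (ContinuousLinearMap.proj h :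
        (Fin d → ℝ) →L[ℝ] ℝ)) x := by
    intro h
    have h1 : HasDerivAt (fun t : ℝ => (t - x0 h) ^ i h)
        ((i h : ℝ) * (x h - x0 h) ^ (i h - 1)) (x h) := by
      have := ((hasDerivAt_id (x h)).sub_const (x0 h)).fun_pow (i h)
      simpa using this
    have hp : HasFDerivAt (fun x : Fin d → ℝ => x h)
        (ContinuousLinearMap.proj h : (Fin d → ℝ) →L[ℝ] ℝ) x :=
      (ContinuousLinearMap.proj h : (Fin d → ℝ) →L[ℝ] ℝ).hasFDerivAt
    exact h1.comp_hasFDerivAt (f := fun x : Fin d → ℝ => x h) x hp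
  have hprod := HasFDerivAt.finset_prod (u := Finset.univ)
    (fun h _ => hf h)
  have hfd : pdFun g (mono x0 i) x = _ := congrArg (fun L => L (Pi.single g 1)) hprod.fderiv
  rw [hfd]
  rw [ContinuousLinearMap.sum_apply]
  rw [Finset.sum_eq_single g]
  · simp only [ContinuousLinearMap.smul_apply, ContinuousLinearMap.proj_apply,
      Pi.single_eq_same, smul_eq_mul, mul_one]
    set j : Fin d →₀ ℕ := i - Finsupp.single g 1 with hj
    have hsplit : mono x0 j x
        = (x g - x0 g) ^ (j g) *
          ∏ h ∈ Finset.univ.erase g, (x h - x0 h) ^ (j h) := by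
      rw [mono, ← Finset.mul_prod_erase Finset.univ _ (Finset.mem_univ g)]
    rw [hsplit]
    have he : ∀ h ∈ Finset.univ.erase g, (x h - x0 h) ^ (j h)
        = (x h - x0 h) ^ (i h) := by
      intro h hh
      have hne : h ≠ g := (Finset.mem_erase.1 hh).1
      rw [hj, Finsupp.tsub_apply, Finsupp.single_apply, if_neg (Ne.symm hne), Nat.sub_zero]
    rw [Finset.prod_congr rfl he]
    have hg : j g = i g - 1 := by
      rw [hj, Finsupp.tsub_apply, Finsupp.single_apply, if_pos rfl]
    rw [hg]; ring
  · intro h _ hh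
    simp [Pi.single_eq_of_ne (Ne.symm hh) , hh]
  · intro h; exact absurd (Finset.mem_univ g) h

lemma pdList_mono (s : List (Fin d)) (i : Fin d →₀ ℕ) :
    pdList s (mono x0 i) = fun x =>
      ((∏ g, (i g).descFactorial (countF s g) : ℕ) : ℝ) * mono x0 (i - countF s) x := by
  classical
  induction s with
  | nil =>
    funext x
    have h0 : countF ([] : List (Fin d)) = 0 := by ext g; simp
    simp [pdList_nil, h0]
  | cons g s ih =>
    funext x
    rw [pdList_cons, ih]
    have hstep : pdFun g (fun x =>
        ((∏ g', (i g').descFactorial (countF s g') : ℕ) : ℝ) * mono x0 (i - countF s) x) x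
      = ((∏ g', (i g').descFactorial (countF s g') : ℕ) : ℝ)
          * pdFun g (mono x0 (i - countF s)) x :=
      pdFun_const_mul_apply g _ (mono_differentiable _ x)
    rw [hstep, pdFun_mono]
    have hc : countF (g :: s) = countF s + Finsupp.single g 1 := by
      ext g'
      simp only [countF_apply, Finsupp.add_apply, Finsupp.single_apply, List.count_cons]
      by_cases h : g' = g <;> simp [h]
    have hidx : i - countF (g :: s) = i - countF s - Finsupp.single g 1 := by
      rw [hc]; ext g'; simp only [Finsupp.tsub_apply, Finsupp.add_apply]; omega
    have hcoef : (∏ g', (i g').descFactorial (countF (g :: s) g'))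
        = (∏ g', (i g').descFactorial (countF s g')) * ((i - countF s) g) := by
      rw [← Finset.mul_prod_erase Finset.univ _ (Finset.mem_univ g),
          ← Finset.mul_prod_erase Finset.univ
            (fun g' => (i g').descFactorial (countF s g')) (Finset.mem_univ g)]
      have he : ∀ h ∈ Finset.univ.erase g,
          (i h).descFactorial (countF (g :: s) h) = (i h).descFactorial (countF s h) := by
        intro h hh
        have hne : h ≠ g := (Finset.mem_erase.1 hh).1
        rw [hc]; simp [Finsupp.single_apply, if_neg (Ne.symm hne)]
      rw [Finset.prod_congr rfl he]
      have hgg : countF (g :: s) g = countF s g + 1 := by rw [hc]; simp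
      rw [hgg, Nat.descFactorial_succ, Finsupp.tsub_apply]
      ring
    rw [hidx, hcoef]
    push_cast
    ring

lemma mono_self (j : Fin d →₀ ℕ) : mono x0 j x0 = if j = 0 then 1 else 0 := by
  by_cases h : j = 0
  · simp [h, mono]
  · rw [if_neg h]
    obtain ⟨g, hg⟩ : ∃ g, j g ≠ 0 := by
      by_contra hc
      push_neg at hc
      exact h (by ext g; simpa using hc g)
    exact Finset.prod_eq_zero (Finset.mem_univ g) (by simp [zero_pow hg])

lemma pdList_mono_x0 (s : List (Fin d)) (i : Fin d →₀ ℕ) :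
    pdList s (mono x0 i) x0
      = if countF s = i then ((∏ g, (i g).factorial : ℕ) : ℝ) else 0 := by
  rw [pdList_mono]
  simp only [mono_self]
  by_cases h : countF s = i
  · rw [if_pos h, h]
    have : i - i = 0 := by ext g; simp
    rw [this, if_pos rfl, mul_one]
    have : (∏ g, (i g).descFactorial (i g)) = ∏ g, (i g).factorial :=
      Finset.prod_congr rfl fun g _ => Nat.descFactorial_self (i g)
    rw [this]
  · rw [if_neg h]
    by_cases h2 : i - countF s = 0
    · rw [if_pos h2, mul_one]
      obtain ⟨g, hg⟩ : ∃ g, i g < countF s g := by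
        by_contra hc
        push_neg at hc
        refine h ?_
        have hle : ∀ g, countF s g ≤ i g := hc
        ext g
        have h3 := Finsupp.ext_iff.1 h2 g
        rw [Finsupp.tsub_apply] at h3
        simp only [Finsupp.coe_zero, Pi.zero_apply] at h3
        have h4 := hc g
        omega
      have : (∏ g', (i g').descFactorial (countF s g')) = 0 :=
        Finset.prod_eq_zero (Finset.mem_univ g)
          ((Nat.descFactorial_eq_zero_iff_lt).2 hg)
      rw [this]; simp
    · rw [if_neg h2, mul_zero]

end monomial

section bridge
variable {d : ℕ} {f u : (Fin d → ℝ) → ℝ} {x0 : Fin d → ℝ}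

/-- canonical list of a multiindex -/
def iList {d : ℕ} (i : Fin d →₀ ℕ) : List (Fin d) :=
  (List.ofFn fun g => List.replicate (i g) g).flatten

lemma pdList_replicate (k : ℕ) (g : Fin d) : pdList (List.replicate k g) f = (pdFun g)^[k] f := by
  induction k with
  | zero => rfl
  | succ k ih =>
    rw [List.replicate_succ, pdList_cons, ih, Function.iterate_succ']
    rfl

lemma pdList_flatten (ls : List (List (Fin d))) (f : (Fin d → ℝ) → ℝ) :
    ((ls.map (fun t (h : (Fin d → ℝ) → ℝ) => pdList t h)).foldr (· ∘ ·) id) f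
      = pdList ls.flatten f := by
  induction ls generalizing f with
  | nil => rfl
  | cons t ls ih =>
    simp only [List.map_cons, List.foldr_cons, List.flatten_cons, Function.comp_apply]
    rw [pdList_append]
    exact congrArg (pdList t) (ih f)

lemma pdMulti_eq_pdList (i : Fin d →₀ ℕ) : pdMulti i f = pdList (iList i) f := by
  have hfn : (List.ofFn fun g : Fin d => (pdFun g)^[i g])
      = List.ofFn ((fun t (h : (Fin d → ℝ) → ℝ) => pdList t h)
          ∘ fun g => List.replicate (i g) g) := by
    refine congrArg List.ofFn ?_
    funext g h
    exact (pdList_replicate (i g) g).symm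
  rw [pdMulti, hfn, ← List.map_ofFn, pdList_flatten, iList]

lemma countF_iList (i : Fin d →₀ ℕ) : countF (iList i) = i := by
  ext g
  rw [countF_apply, iList, List.count_flatten, List.map_ofFn, List.sum_ofFn]
  simp only [Function.comp]
  rw [Finset.sum_eq_single g]
  · simp [List.count_replicate]
  · intro h _ hh
    simp [List.count_replicate, hh]
  · intro h; exact absurd (Finset.mem_univ g) h

lemma length_iList (i : Fin d →₀ ℕ) : (iList i).length = ∑ g, i g := by
  rw [iList, List.length_flatten, List.map_ofFn, List.sum_ofFn]
  simp

lemma sum_countF (w : List (Fin d)) : ∑ g, countF w g = w.length := by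
  induction w with
  | nil => simp
  | cons g w ih =>
    simp only [countF_apply, List.count_cons, List.length_cons] at *
    rw [Finset.sum_add_distrib, ih]
    congr 1
    simp [Finset.sum_ite_eq' Finset.univ g]

lemma perm_iList (w : List (Fin d)) : w.Perm (iList (countF w)) := by
  rw [List.perm_iff_count]
  intro a
  have := congrFun (congrArg (fun F : Fin d →₀ ℕ => (F : Fin d → ℕ)) (countF_iList (countF w))) a
  simpa using this.symm

lemma mem_degLE {k : ℕ} {i : Fin d →₀ ℕ} : i ∈ degLE d k ↔ (∑ g, i g) ≤ k := by
  rw [degLE, Finset.mem_filter]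
  constructor
  · exact fun h => h.2
  · intro h
    refine ⟨Finset.mem_Iic.2 ?_, h⟩
    intro g
    refine le_trans ?_ h
    simpa using Finset.single_le_sum (f := fun g' => i g') (fun _ _ => Nat.zero_le _)
      (Finset.mem_univ g)

lemma contDiff_taylorFun (n k : ℕ) : ContDiff ℝ n (taylorFun x0 k u) := by
  refine ContDiff.sum fun i _ => ?_
  exact (contDiff_const.mul (contDiff_mono (n := n) i) :
    ContDiff ℝ n fun x => (pdMulti i u x0 / ∏ g, ((i g).factorial : ℝ)) * mono x0 i x)

lemma evC_taylorFun (n k : ℕ) : EvC x0 n (taylorFun x0 k u) :=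
  Filter.Eventually.of_forall fun _ => (contDiff_taylorFun n k).contDiffAt

/-- derivatives of the Taylor polynomial at multiindices of degree ≤ p agree with those of u -/
lemma pdMulti_taylor_eval {p : ℕ} (i : Fin d →₀ ℕ) (hi : ∑ g, i g ≤ p) :
    pdMulti i (taylorFun x0 p u) x0 = pdMulti i u x0 := by
  classical
  rw [pdMulti_eq_pdList]
  set w := iList i with hw
  have hwc : countF w = i := countF_iList i
  have hT : taylorFun x0 p u = fun x => ∑ j ∈ degLE d p,
      (pdMulti j u x0 / ∏ g, ((j g).factorial : ℝ)) * mono x0 j x := rfl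
  have hEv : ∀ j ∈ degLE d p, EvC x0 w.length
      (fun x => (pdMulti j u x0 / ∏ g, ((j g).factorial : ℝ)) * mono x0 j x) :=
    fun j _ => Filter.Eventually.of_forall fun _ =>
      (contDiff_const.mul (contDiff_mono j)).contDiffAt
  have E1 := pdList_sum (x0 := x0) w (degLE d p) _ hEv
  rw [hT]
  have E2 : ∀ j ∈ degLE d p,
      pdList w (fun x => (pdMulti j u x0 / ∏ g, ((j g).factorial : ℝ)) * mono x0 j x) x0
      = (pdMulti j u x0 / ∏ g, ((j g).factorial : ℝ)) * pdList w (mono x0 j) x0 := by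
    intro j _
    exact (pdList_const_mul w _ (Filter.Eventually.of_forall fun _ =>
      (contDiff_mono j).contDiffAt)).eq_of_nhds
  rw [E1.eq_of_nhds]
  rw [Finset.sum_congr rfl E2]
  have E3 : ∀ j ∈ degLE d p, pdList w (mono x0 j) x0
      = if i = j then ((∏ g, (j g).factorial : ℕ) : ℝ) else 0 := by
    intro j _
    rw [pdList_mono_x0, hwc]
  rw [Finset.sum_congr rfl fun j hj => by rw [E3 j hj]]
  rw [Finset.sum_eq_single i]
  · rw [if_pos rfl]
    push_cast
    rw [div_mul_cancel₀]
    refine Finset.prod_ne_zero_iff.2 fun g _ => ?_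
    exact_mod_cast (Nat.factorial_pos (i g)).ne'
  · intro j _ hj
    rw [if_neg (Ne.symm hj), mul_zero]
  · intro hni
    exact absurd (mem_degLE.2 hi) hni

lemma pdList_taylor_eval {p : ℕ} (hu : EvC x0 p u) (w : List (Fin d)) (hw : w.length ≤ p) :
    pdList w (taylorFun x0 p u) x0 = pdList w u x0 := by
  have hperm := perm_iList w
  have h1 : pdList w u x0 = pdList (iList (countF w)) u x0 :=
    (pdList_perm hperm (hu.mono hw)).eq_of_nhds
  have h2 : pdList w (taylorFun x0 p u) x0 = pdList (iList (countF w)) (taylorFun x0 p u) x0 :=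
    (pdList_perm hperm (evC_taylorFun w.length p)).eq_of_nhds
  rw [h1, h2, ← pdMulti_eq_pdList, ← pdMulti_eq_pdList]
  refine pdMulti_taylor_eval _ ?_
  rw [sum_countF]; exact hw

lemma pdList_diff_vanish {p : ℕ} (hu : EvC x0 p u) (w : List (Fin d)) (hw : w.length ≤ p) :
    pdList w (fun x => taylorFun x0 p u x - u x) x0 = 0 := by
  have := (pdList_sub (a := taylorFun x0 p u) (b := u) w
    (evC_taylorFun w.length p) (hu.mono hw)).eq_of_nhds
  rw [this, pdList_taylor_eval hu w hw, sub_self]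

end bridge

/-- If `u ∈ C^{p+γ}` satisfies `L u = 0` near `x0`, then its degree-`p` Taylor
polynomial satisfies the quasi-Trefftz property `T_{p−γ}[L(T_p u)] = 0`. -/
theorem stmt_13 {d : ℕ} (x0 : Fin d → ℝ) (γ p : ℕ) (hγ : 1 ≤ γ) (hp : γ ≤ p)
    (c : (Fin d →₀ ℕ) → (Fin d → ℝ) → ℝ)
    (hc : ∀ j ∈ degLE d γ, ContDiffAt ℝ (p - γ : ℕ) (c j) x0)
    (u : (Fin d → ℝ) → ℝ)
    (hu : ContDiffAt ℝ (p + γ : ℕ) u x0)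
    (hLu : ∀ᶠ x in nhds x0, applyL γ c u x = 0) :
    taylorFun x0 (p - γ) (applyL γ c (taylorFun x0 p u)) = 0 := by
  classical
  set n := p - γ with hn
  have hnγ : n + γ = p := Nat.sub_add_cancel hp
  set T := taylorFun x0 p u with hT
  set F := applyL γ c T with hF
  -- smoothness facts
  have hu' : EvC x0 (p + γ) u := EvC.of_contDiffAt hu
  have hup : EvC x0 p u := hu'.mono (by omega)
  have hcj : ∀ j ∈ degLE d γ, EvC x0 n (c j) := fun j hj => EvC.of_contDiffAt (hc j hj)
  have hdiffEv : EvC x0 p (fun x => T x - u x) := by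
    filter_upwards [hup] with y hy
    exact ((contDiff_taylorFun (x0 := x0) (u := u) p p).contDiffAt).sub hy
  have hlenj : ∀ j ∈ degLE d γ, (iList j).length ≤ γ := by
    intro j hj
    rw [length_iList]
    exact mem_degLE.1 hj
  -- the key vanishing statement
  have key : ∀ i ∈ degLE d n, pdMulti i F x0 = 0 := by
    intro i hi
    have hi' : ∑ g, i g ≤ n := mem_degLE.1 hi
    rw [pdMulti_eq_pdList]
    set s := iList i with hs
    have hslen : s.length ≤ n := by rw [hs, length_iList]; exact hi'
    -- EvC facts for summands
    have hTpd : ∀ (m : ℕ) (j : Fin d →₀ ℕ), EvC x0 m (pdMulti j T) := by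
      intro m j
      rw [pdMulti_eq_pdList]
      exact EvC.pdList _ (evC_taylorFun _ p)
    have hupd : ∀ j ∈ degLE d γ, EvC x0 n (pdMulti j u) := by
      intro j hj
      rw [pdMulti_eq_pdList]
      refine EvC.pdList _ (hu'.mono ?_)
      have := hlenj j hj
      omega
    have hdpd : ∀ j ∈ degLE d γ, EvC x0 n (pdMulti j (fun x => T x - u x)) := by
      intro j hj
      rw [pdMulti_eq_pdList]
      refine EvC.pdList _ (hdiffEv.mono ?_)
      have := hlenj j hj
      omega
    have hmulEv : ∀ j ∈ degLE d γ, EvC x0 s.length (fun y => c j y * pdMulti j T y) := by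
      intro j hj
      filter_upwards [hcj j hj, hTpd n j] with y h1 h2
      exact (h1.mul h2).of_le (by exact_mod_cast hslen)
    -- step 1 : commute pdList with the sum defining applyL
    have E1 : pdList s F =ᶠ[nhds x0]
        fun x => ∑ j ∈ degLE d γ, pdList s (fun y => c j y * pdMulti j T y) x := by
      rw [hF, show applyL γ c T = (fun x => ∑ j ∈ degLE d γ, c j x * pdMulti j T x) from rfl]
      exact pdList_sum s (degLE d γ) _ hmulEv
    rw [E1.eq_of_nhds]
    -- step 2 : per-term decomposition
    have E2 : ∀ j ∈ degLE d γ,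
        pdList s (fun y => c j y * pdMulti j T y) x0
          = pdList s (fun y => c j y * pdMulti j u y) x0 := by
      intro j hj
      have ha : pdMulti j T =ᶠ[nhds x0]
          fun y => pdMulti j u y + pdMulti j (fun x => T x - u x) y := by
        have hTu : T = fun y => u y + (T y - u y) := by funext y; ring
        rw [pdMulti_eq_pdList, pdMulti_eq_pdList, pdMulti_eq_pdList]
        calc pdList (iList j) T
            = pdList (iList j) (fun y => u y + (T y - u y)) := by rw [← hTu]
          _ =ᶠ[nhds x0] _ := pdList_add (iList j)
              (hu'.mono (by have := hlenj j hj; omega))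
              (hdiffEv.mono (by have := hlenj j hj; omega))
      have hb : (fun y => c j y * pdMulti j T y) =ᶠ[nhds x0]
          fun y => (c j y * pdMulti j u y) + (c j y * pdMulti j (fun x => T x - u x) y) := by
        filter_upwards [ha] with y hy
        rw [hy]; ring
      have hc1 : pdList s (fun y => c j y * pdMulti j T y) x0
          = pdList s (fun y => (c j y * pdMulti j u y)
              + (c j y * pdMulti j (fun x => T x - u x) y)) x0 :=
        (pdList_congr s hb).eq_of_nhds
      rw [hc1]
      have hadd := pdList_add (x0 := x0) s (a := fun y => c j y * pdMulti j u y)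
        (b := fun y => c j y * pdMulti j (fun x => T x - u x) y)
        (by filter_upwards [hcj j hj, hupd j hj] with y h1 h2
            exact (h1.mul h2).of_le (by exact_mod_cast hslen))
        (by filter_upwards [hcj j hj, hdpd j hj] with y h1 h2
            exact (h1.mul h2).of_le (by exact_mod_cast hslen))
      rw [hadd.eq_of_nhds]
      have hvan : pdList s (fun y => c j y * pdMulti j (fun x => T x - u x) y) x0 = 0 := by
        refine pdList_mul_vanish (n := n) (hcj j hj) (hdpd j hj) ?_ s hslen
        intro t ht
        rw [pdMulti_eq_pdList, ← pdList_append]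
        refine pdList_diff_vanish hup _ ?_
        have h1 : (t ++ iList j).length = t.length + (iList j).length := by simp
        have := hlenj j hj
        omega
      rw [hvan, add_zero]
    rw [Finset.sum_congr rfl E2]
    -- step 3 : recombine and use Lu = 0
    have E3 : pdList s (applyL γ c u) =ᶠ[nhds x0]
        fun x => ∑ j ∈ degLE d γ, pdList s (fun y => c j y * pdMulti j u y) x := by
      rw [show applyL γ c u = (fun x => ∑ j ∈ degLE d γ, c j x * pdMulti j u x) from rfl]
      refine pdList_sum s (degLE d γ) _ fun j hj => ?_
      filter_upwards [hcj j hj, hupd j hj] with y h1 h2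
      exact (h1.mul h2).of_le (by exact_mod_cast hslen)
    rw [← E3.eq_of_nhds]
    have E4 : pdList s (applyL γ c u) =ᶠ[nhds x0] pdList s (fun _ => (0:ℝ)) :=
      pdList_congr s (by filter_upwards [hLu] with y hy using hy)
    rw [E4.eq_of_nhds, pdList_zero]
  -- conclude
  funext x
  show (∑ i ∈ degLE d n,
      (pdMulti i F x0 / ∏ g, ((i g).factorial : ℝ)) * ∏ g, (x g - x0 g) ^ i g) = 0
  refine Finset.sum_eq_zero fun i hi => ?_
  rw [key i hi, zero_div, zero_mul]
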